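/- Let a, b, c ∈ Aut(X*) be defined by the wreath recursion a = σ(a,c), b = σ(c,a), c = (a,a). Then c = a⁻² holds in G = ⟨a,b,c⟩, and G is isomorphic to the Klein bottle group ⟨s,t | s² = t²⟩, the homomorphism ⟨s,t | s² = t²⟩ → G determined by s ↦ a, t ↦ b being an isomorphism. Equivalently, setting x = ab⁻¹ one has a⁻¹xa = x⁻¹, both a and x have infinite order, and G = ⟨x, a | a⁻¹ x a = x⁻¹⟩. -/

import Mathlib

/-- `WRec s f f₀ f₁` says that the tree automorphism `f` of the binary rooted tree
`X* = List Bool` is given by the wreath recursion `f = σˢ(f₀, f₁)`: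
the root permutation of `f` is the transposition `σ` when `s = true` and is trivial when
`s = false`, the section of `f` at the letter `0 = false` is `f₀`, and the section of `f`
at the letter `1 = true` is `f₁`. -/
def WRec (s : Bool) (f f₀ f₁ : Equiv.Perm (List Bool)) : Prop :=
  f [] = [] ∧ (∀ w : List Bool, f (false :: w) = s :: f₀ w) ∧
    (∀ w : List Bool, f (true :: w) = (!s) :: f₁ w)

/-- The single defining relator `s² (t²)⁻¹` of the Klein bottle group
`⟨s, t | s² = t²⟩`. -/
def kleinBottleRels : Set (FreeGroup (Fin 2)) :=
  {FreeGroup.of 0 ^ 2 * (FreeGroup.of 1 ^ 2)⁻¹}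

lemma fixnil_zpow (g : Equiv.Perm (List Bool)) (h : g [] = []) :
    ∀ n : ℤ, (g ^ n) [] = [] := by
  have hinv : g⁻¹ [] = [] := Equiv.Perm.inv_eq_iff_eq.2 h.symm
  intro n
  induction n using Int.induction_on with
  | zero => simp
  | succ n ih => simp only [zpow_add_one, Equiv.Perm.mul_apply, h, ih]
  | pred n ih => simp only [zpow_sub_one, Equiv.Perm.mul_apply, hinv, ih]

lemma sect_zpow (g h : Equiv.Perm (List Bool)) (x : Bool)
    (H : ∀ w, g (x :: w) = x :: h w) :
    ∀ (m : ℤ) (w : List Bool), (g ^ m) (x :: w) = x :: (h ^ m) w := by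
  have Hinv : ∀ w, g⁻¹ (x :: w) = x :: h⁻¹ w := by
    intro w
    rw [Equiv.Perm.inv_eq_iff_eq, H]
    simp
  intro m
  induction m using Int.induction_on with
  | zero => simp
  | succ n ih => intro w; simp only [zpow_add_one, Equiv.Perm.mul_apply, H, ih]
  | pred n ih => intro w; simp only [zpow_sub_one, Equiv.Perm.mul_apply, Hinv, ih]

lemma klein_nf (g : PresentedGroup kleinBottleRels) :
    ∃ m n : ℤ,
      g = (PresentedGroup.of 0 * (PresentedGroup.of 1)⁻¹) ^ m * (PresentedGroup.of 0) ^ n := by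
  set A : PresentedGroup kleinBottleRels := PresentedGroup.of 0 with hA
  set B : PresentedGroup kleinBottleRels := PresentedGroup.of 1 with hB
  have hAB : A * A = B * B := by
    have hmem : (FreeGroup.of (0 : Fin 2) ^ 2 * (FreeGroup.of (1 : Fin 2) ^ 2)⁻¹) ∈
        kleinBottleRels := rfl
    have h1 : PresentedGroup.mk kleinBottleRels
        (FreeGroup.of 0 ^ 2 * (FreeGroup.of 1 ^ 2)⁻¹) = 1 :=
      (QuotientGroup.eq_one_iff _).2 (Subgroup.subset_normalClosure hmem)
    rw [map_mul, map_inv, map_pow, map_pow] at h1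
    have h2 := mul_inv_eq_one.1 h1
    rw [pow_two, pow_two] at h2
    exact h2
  set X : PresentedGroup kleinBottleRels := A * B⁻¹ with hX
  have hconj : A * X * A⁻¹ = X⁻¹ := by
    calc A * (A * B⁻¹) * A⁻¹ = (A * A) * B⁻¹ * A⁻¹ := by group
    _ = (B * B) * B⁻¹ * A⁻¹ := by rw [hAB]
    _ = (A * B⁻¹)⁻¹ := by group
  have hconj' : A⁻¹ * X * A⁻¹⁻¹ = X⁻¹ := by
    calc A⁻¹ * (A * B⁻¹) * A⁻¹⁻¹ = B⁻¹ * (A * A) * A⁻¹ := by group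
    _ = B⁻¹ * (B * B) * A⁻¹ := by rw [hAB]
    _ = (A * B⁻¹)⁻¹ := by group
  have hconjk : ∀ k : ℤ, A * X ^ k * A⁻¹ = X ^ (-k) := by
    intro k
    rw [← conj_zpow, hconj, inv_zpow, zpow_neg]
  have hconjk' : ∀ k : ℤ, A⁻¹ * X ^ k * A⁻¹⁻¹ = X ^ (-k) := by
    intro k
    rw [← conj_zpow, hconj', inv_zpow, zpow_neg]
  have hmove : ∀ n k : ℤ, ∃ k' : ℤ, A ^ n * X ^ k = X ^ k' * A ^ n := by
    intro n
    induction n using Int.induction_on with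
    | zero => intro k; exact ⟨k, by simp⟩
    | succ n ih =>
      intro k
      obtain ⟨k', hk'⟩ := ih (-k)
      refine ⟨k', ?_⟩
      have h1 : A * X ^ k = X ^ (-k) * A := by rw [← hconjk k]; group
      calc A ^ ((n : ℤ) + 1) * X ^ k = A ^ (n : ℤ) * (A * X ^ k) := by
            rw [zpow_add_one]; group
      _ = A ^ (n : ℤ) * (X ^ (-k) * A) := by rw [h1]
      _ = (A ^ (n : ℤ) * X ^ (-k)) * A := by group
      _ = X ^ k' * A ^ (n : ℤ) * A := by rw [hk']
      _ = X ^ k' * A ^ ((n : ℤ) + 1) := by rw [zpow_add_one]; group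
    | pred n ih =>
      intro k
      obtain ⟨k', hk'⟩ := ih (-k)
      refine ⟨k', ?_⟩
      have h1 : A⁻¹ * X ^ k = X ^ (-k) * A⁻¹ := by rw [← hconjk' k]; group
      calc A ^ (-(n : ℤ) - 1) * X ^ k = A ^ (-(n:ℤ)) * (A⁻¹ * X ^ k) := by
            rw [zpow_sub_one]; group
      _ = A ^ (-(n:ℤ)) * (X ^ (-k) * A⁻¹) := by rw [h1]
      _ = (A ^ (-(n:ℤ)) * X ^ (-k)) * A⁻¹ := by group
      _ = X ^ k' * A ^ (-(n:ℤ)) * A⁻¹ := by rw [hk']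
      _ = X ^ k' * A ^ (-(n : ℤ) - 1) := by rw [zpow_sub_one]; group
  have hg : g ∈ Subgroup.closure (Set.range (PresentedGroup.of : Fin 2 → _)) := by
    rw [PresentedGroup.closure_range_of]; trivial
  induction hg using Subgroup.closure_induction with
  | mem y hy =>
    obtain ⟨i, rfl⟩ := hy
    fin_cases i
    · exact ⟨0, 1, by simp [hA]⟩
    · refine ⟨-1, 1, ?_⟩
      show B = X ^ (-1 : ℤ) * A ^ (1 : ℤ)
      rw [hX]
      group
  | one => exact ⟨0, 0, by simp⟩
  | mul u v hu hv ihu ihv =>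
    obtain ⟨m, n, rfl⟩ := ihu
    obtain ⟨m', n', rfl⟩ := ihv
    obtain ⟨k', hk'⟩ := hmove n m'
    refine ⟨m + k', n + n', ?_⟩
    calc X ^ m * A ^ n * (X ^ m' * A ^ n') = X ^ m * (A ^ n * X ^ m') * A ^ n' := by group
    _ = X ^ m * (X ^ k' * A ^ n) * A ^ n' := by rw [hk']
    _ = X ^ (m + k') * A ^ (n + n') := by rw [zpow_add, zpow_add]; group
  | inv u hu ihu =>
    obtain ⟨m, n, rfl⟩ := ihu
    obtain ⟨k', hk'⟩ := hmove (-n) (-m)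
    refine ⟨k', -n, ?_⟩
    calc (X ^ m * A ^ n)⁻¹ = A ^ (-n) * X ^ (-m) := by group
    _ = X ^ k' * A ^ (-n) := hk'

/-- Let `a, b, c` be the tree automorphisms defined by the wreath
recursion `a = σ(a,c)`, `b = σ(c,a)`, `c = (a,a)`.  Then `c = a⁻²` holds in
`G = ⟨a,b,c⟩`, and `G` is isomorphic to the Klein bottle group `⟨s, t | s² = t²⟩` via
the homomorphism determined by `s ↦ a`, `t ↦ b`.  Equivalently, setting `x = ab⁻¹` one
has `a⁻¹xa = x⁻¹`, both `a` and `x` have infinite order, and `G = ⟨x, a⟩`. -/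
theorem generates_klein_bottle_group (a b c : Equiv.Perm (List Bool))
    (ha : WRec true a a c) (hb : WRec true b c a) (hc : WRec false c a a) :
    c = a ^ (-2 : ℤ) ∧
    (∃ ψ : PresentedGroup kleinBottleRels →* Subgroup.closure {a, b, c},
      Function.Bijective ψ ∧
      (ψ (PresentedGroup.of 0) : Equiv.Perm (List Bool)) = a ∧
      (ψ (PresentedGroup.of 1) : Equiv.Perm (List Bool)) = b) ∧
    a⁻¹ * (a * b⁻¹) * a = (a * b⁻¹)⁻¹ ∧
    ¬ IsOfFinOrder a ∧
    ¬ IsOfFinOrder (a * b⁻¹) ∧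
    Subgroup.closure {a, b, c} = Subgroup.closure {a * b⁻¹, a} := by
  obtain ⟨ha0, ha1, ha2⟩ := ha
  obtain ⟨hb0, hb1, hb2⟩ := hb
  obtain ⟨hc0, hc1, hc2⟩ := hc
  have ha2' : ∀ w, a (true :: w) = false :: c w := fun w => by simpa using ha2 w
  have hb2' : ∀ w, b (true :: w) = false :: a w := fun w => by simpa using hb2 w
  have hc2' : ∀ w, c (true :: w) = true :: a w := fun w => by simpa using hc2 w
  -- the three basic relations, proved by simultaneous induction
  have tri : ∀ w : List Bool, a (a (c w)) = w ∧ c (a (a w)) = w ∧ a (c (a w)) = w := by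
    intro w
    induction w with
    | nil => simp [ha0, hc0]
    | cons x w ih =>
      obtain ⟨i1, i2, i3⟩ := ih
      cases x <;> simp [ha1, ha2', hc1, hc2', i1, i2, i3]
  have hc2eq : c = (a * a)⁻¹ := by
    have h : (a * a) * c = 1 := Equiv.ext fun w => by
      simpa [Equiv.Perm.mul_apply] using (tri w).1
    exact (inv_eq_of_mul_eq_one_right h).symm
  have goal1 : c = a ^ (-2 : ℤ) := by rw [hc2eq]; group
  have hcw : ∀ w, c w = a⁻¹ (a⁻¹ w) := fun w => by
    rw [hc2eq]; simp [mul_inv_rev, Equiv.Perm.mul_apply]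
  have hcinvw : ∀ w, c⁻¹ w = a (a w) := fun w => by
    rw [hc2eq]; simp [Equiv.Perm.mul_apply]
  have hcomm : ∀ w, c (a w) = a (c w) := fun w => by simp [hcw]
  have habab : a * a = b * b := Equiv.ext fun w => by
    cases w with
    | nil => simp [Equiv.Perm.mul_apply, ha0, hb0]
    | cons x w => cases x <;> simp [Equiv.Perm.mul_apply, ha1, ha2', hb1, hb2', hcomm]
  have hrel : a⁻¹ * (a * b⁻¹) * a = (a * b⁻¹)⁻¹ := by
    have h1 : b⁻¹ * a = b * a⁻¹ := by
      calc b⁻¹ * a = b⁻¹ * (a * a) * a⁻¹ := by group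
      _ = b⁻¹ * (b * b) * a⁻¹ := by rw [habab]
      _ = b * a⁻¹ := by group
    calc a⁻¹ * (a * b⁻¹) * a = b⁻¹ * a := by group
    _ = b * a⁻¹ := h1
    _ = (a * b⁻¹)⁻¹ := by group
  -- sections of a² and of x = a b⁻¹
  have haaw : ∀ (x : Bool) (w : List Bool), (a * a) (x :: w) = x :: a⁻¹ w := by
    intro x w
    cases x <;> simp [Equiv.Perm.mul_apply, ha1, ha2', hcw]
  have haaz : ∀ (x : Bool) (j : ℤ) (w : List Bool),
      ((a * a) ^ j) (x :: w) = x :: (a⁻¹ ^ j) w :=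
    fun x => sect_zpow (a * a) a⁻¹ x (haaw x)
  have hbinv1 : ∀ w, b⁻¹ (false :: w) = true :: a⁻¹ w := fun w =>
    Equiv.Perm.inv_eq_iff_eq.2 (by simp [hb2'])
  have hbinv2 : ∀ w, b⁻¹ (true :: w) = false :: c⁻¹ w := fun w =>
    Equiv.Perm.inv_eq_iff_eq.2 (by simp [hb1])
  have hx1 : ∀ w, (a * b⁻¹) (false :: w) = false :: (a * a * a)⁻¹ w := by
    intro w
    simp [Equiv.Perm.mul_apply, hbinv1, ha2', hcw, mul_inv_rev]
  have hx2 : ∀ w, (a * b⁻¹) (true :: w) = true :: (a * a * a) w := by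
    intro w
    simp [Equiv.Perm.mul_apply, hbinv2, ha1, hcinvw]
  have hxz1 := sect_zpow (a * b⁻¹) (a * a * a)⁻¹ false hx1
  have hxz2 := sect_zpow (a * b⁻¹) (a * a * a) true hx2
  have hainvnil := fixnil_zpow a⁻¹ (Equiv.Perm.inv_eq_iff_eq.2 ha0.symm)
  have hpnil : (a * a * a) [] = [] := by simp [Equiv.Perm.mul_apply, ha0]
  have h2z : a ^ (2 : ℤ) = a * a := by
    rw [show (2:ℤ) = 1 + 1 by norm_num, zpow_add, zpow_one]
  have heval0 : ∀ j : ℤ, (a ^ (2 * j)) [false] = [false] := by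
    intro j
    rw [zpow_mul, h2z]
    have h := haaz false j []
    rw [hainvnil j] at h
    exact h
  have heval1 : ∀ j : ℤ, (a ^ (2 * j + 1)) [false] = [true] := by
    intro j
    rw [zpow_add, zpow_one, Equiv.Perm.mul_apply]
    have hf : a [false] = [true] := by simpa [ha0] using ha1 []
    rw [hf, zpow_mul, h2z]
    have h := haaz true j []
    rw [hainvnil j] at h
    exact h
  -- a has infinite order
  have hpown : ∀ n : ℕ, 0 < n → a ^ n ≠ 1 := by
    intro n
    induction n using Nat.strong_induction_on with
    | _ n ih =>
      intro hn h1
      rcases Nat.even_or_odd n with ⟨k, hk⟩ | ⟨k, hk⟩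
      · have hk0 : 0 < k := by omega
        have hnz : (a : Equiv.Perm (List Bool)) ^ n = (a * a) ^ (k : ℤ) := by
          rw [← zpow_natCast a n, show ((n : ℤ)) = 2 * (k : ℤ) by omega, zpow_mul, h2z]
        have h2 : ∀ w, (a⁻¹ ^ (k : ℤ)) w = w := by
          intro w
          have h3 := haaz false (k : ℤ) w
          rw [← hnz, h1] at h3
          simp only [Equiv.Perm.one_apply, List.cons.injEq, true_and] at h3
          exact h3.symm
        have h4 : a⁻¹ ^ (k : ℤ) = 1 := Equiv.ext h2
        rw [inv_zpow, inv_eq_one, zpow_natCast] at h4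
        exact ih k (by omega) hk0 h4
      · have h2 := DFunLike.congr_fun h1 [false]
        have h3 : (a ^ n) [false] = [true] := by
          rw [← zpow_natCast a n, show ((n : ℤ)) = 2 * (k : ℤ) + 1 by omega]
          exact heval1 k
        rw [h3] at h2
        simp at h2
  have hfinA : ¬ IsOfFinOrder a := by
    rw [isOfFinOrder_iff_pow_eq_one]
    rintro ⟨n, hn, h⟩
    exact hpown n hn h
  have hZ : ∀ n : ℤ, a ^ n = 1 → n = 0 := by
    intro n h
    have hinj := injective_zpow_iff_not_isOfFinOrder.2 hfinA
    have := hinj (a₁ := n) (a₂ := 0) (by simpa using h)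
    exact this
  have h3z : a ^ (3 : ℤ) = a * a * a := by
    rw [show (3:ℤ) = 1 + 1 + 1 by norm_num, zpow_add, zpow_add, zpow_one]
  have hfinX : ¬ IsOfFinOrder (a * b⁻¹) := by
    rw [isOfFinOrder_iff_pow_eq_one]
    rintro ⟨n, hn, h⟩
    have h2 : ∀ w, ((a * a * a) ^ (n : ℤ)) w = w := by
      intro w
      have h3 := hxz2 (n : ℤ) w
      rw [zpow_natCast, h] at h3
      simp only [Equiv.Perm.one_apply, List.cons.injEq, true_and] at h3
      exact h3.symm
    have h3 : (a * a * a) ^ (n : ℤ) = 1 := Equiv.ext h2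
    have h4 : a ^ (3 * (n : ℤ)) = 1 := by rw [zpow_mul, h3z]; exact h3
    have := hZ _ h4
    omega
  -- closure equality
  have hmema : a ∈ Subgroup.closure {a, b, c} := Subgroup.subset_closure (by simp)
  have hmemb : b ∈ Subgroup.closure {a, b, c} := Subgroup.subset_closure (by simp)
  have hmemc : c ∈ Subgroup.closure {a, b, c} := Subgroup.subset_closure (by simp)
  have hclos : Subgroup.closure {a, b, c} = Subgroup.closure {a * b⁻¹, a} := by
    apply le_antisymm
    · rw [Subgroup.closure_le]
      intro g hg
      have hxmem : a * b⁻¹ ∈ Subgroup.closure {a * b⁻¹, a} :=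
        Subgroup.subset_closure (by simp)
      have hamem : a ∈ Subgroup.closure {a * b⁻¹, a} :=
        Subgroup.subset_closure (by simp)
      simp only [Set.mem_insert_iff, Set.mem_singleton_iff] at hg
      rcases hg with rfl | rfl | rfl
      · exact hamem
      · have h := mul_mem (inv_mem hxmem) hamem
        have hgeq : (a * g⁻¹)⁻¹ * a = g := by group
        rwa [hgeq] at h
      · have : (a * a)⁻¹ ∈ Subgroup.closure {a * b⁻¹, a} :=
          inv_mem (mul_mem hamem hamem)
        rw [hc2eq]
        exact this
    · rw [Subgroup.closure_le]
      intro g hg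
      simp only [Set.mem_insert_iff, Set.mem_singleton_iff] at hg
      rcases hg with rfl | rfl
      · exact mul_mem hmema (inv_mem hmemb)
      · exact hmema
  -- the isomorphism
  have hexists : ∃ ψ : PresentedGroup kleinBottleRels →* Subgroup.closure {a, b, c},
      Function.Bijective ψ ∧
      (ψ (PresentedGroup.of 0) : Equiv.Perm (List Bool)) = a ∧
      (ψ (PresentedGroup.of 1) : Equiv.Perm (List Bool)) = b := by
    set f : Fin 2 → Subgroup.closure {a, b, c} := ![⟨a, hmema⟩, ⟨b, hmemb⟩] with hf
    have hrels : ∀ r ∈ kleinBottleRels, FreeGroup.lift f r = 1 := by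
      intro r hr
      rw [kleinBottleRels, Set.mem_singleton_iff] at hr
      subst hr
      rw [map_mul, map_inv, map_pow, map_pow, FreeGroup.lift_apply_of, FreeGroup.lift_apply_of]
      refine mul_inv_eq_one.2 (Subtype.ext ?_)
      push_cast
      simp only [hf, Matrix.cons_val_zero, Matrix.cons_val_one, Matrix.head_cons]
      rw [pow_two, pow_two]
      exact habab
    refine ⟨PresentedGroup.toGroup hrels, ⟨?_, ?_⟩, ?_, ?_⟩
    · -- injective
      refine (injective_iff_map_eq_one _).2 ?_
      intro g hg
      obtain ⟨m, n, rfl⟩ := klein_nf g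
      have hval : (a * b⁻¹) ^ m * a ^ n = 1 := by
        have h0 := congrArg (Subtype.val) hg
        simpa [map_mul, map_zpow, map_inv, PresentedGroup.toGroup.of, hf] using h0
      rcases Int.even_or_odd n with ⟨j, hj⟩ | ⟨j, hj⟩
      · -- n = j + j, even
        have hn2 : a ^ n = (a * a) ^ j := by
          rw [hj, show j + j = 2 * j by ring, zpow_mul, h2z]
        have f1 : 3 * m - j = 0 := by
          have e1 : (a * a * a) ^ m * (a⁻¹) ^ j = 1 := by
            refine Equiv.ext fun w => ?_
            have h1 := DFunLike.congr_fun hval (true :: w)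
            rw [Equiv.Perm.mul_apply, hn2, haaz, hxz2] at h1
            simpa [Equiv.Perm.mul_apply] using h1
          apply hZ
          rw [← h3z] at e1
          rw [← e1]
          group
        have f2 : -(3 * m) - j = 0 := by
          have e2 : ((a * a * a)⁻¹) ^ m * (a⁻¹) ^ j = 1 := by
            refine Equiv.ext fun w => ?_
            have h1 := DFunLike.congr_fun hval (false :: w)
            rw [Equiv.Perm.mul_apply, hn2, haaz, hxz1] at h1
            simpa [Equiv.Perm.mul_apply] using h1
          apply hZ
          rw [← h3z] at e2
          rw [← e2]
          group
        have hm : m = 0 := by omega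
        have hn : n = 0 := by omega
        rw [hm, hn]
        simp
      · -- n odd : contradiction
        exfalso
        have h1 := DFunLike.congr_fun hval [false]
        have e1 : (a ^ n) [false] = [true] := by rw [hj]; exact heval1 j
        have e2 : ((a * b⁻¹) ^ m) [true] = [true] := by
          simpa [fixnil_zpow (a * a * a) hpnil m] using hxz2 m []
        rw [Equiv.Perm.mul_apply, e1] at h1
        rw [show (true :: ([] : List Bool)) = [true] from rfl] at h1
        rw [e2] at h1
        simp at h1
    · -- surjective
      rintro ⟨g, hg⟩
      induction hg using Subgroup.closure_induction with
      | mem y hy =>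
        simp only [Set.mem_insert_iff, Set.mem_singleton_iff] at hy
        rcases hy with rfl | rfl | rfl
        · exact ⟨PresentedGroup.of 0, Subtype.ext (by
            rw [PresentedGroup.toGroup.of]; simp [hf])⟩
        · exact ⟨PresentedGroup.of 1, Subtype.ext (by
            rw [PresentedGroup.toGroup.of]; simp [hf])⟩
        · refine ⟨(PresentedGroup.of 0)⁻¹ * (PresentedGroup.of 0)⁻¹, Subtype.ext ?_⟩
          rw [map_mul, map_inv, PresentedGroup.toGroup.of]
          simp only [hf, Matrix.cons_val_zero]
          conv_rhs => rw [hc2eq]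
          simp [mul_inv_rev]
      | one => exact ⟨1, by rw [map_one]; rfl⟩
      | mul u v hu hv ihu ihv =>
        obtain ⟨y, hy⟩ := ihu
        obtain ⟨z, hz⟩ := ihv
        exact ⟨y * z, by rw [map_mul, hy, hz]; rfl⟩
      | inv u hu ihu =>
        obtain ⟨y, hy⟩ := ihu
        exact ⟨y⁻¹, by rw [map_inv, hy]; rfl⟩
    · rw [PresentedGroup.toGroup.of]; simp [hf]
    · rw [PresentedGroup.toGroup.of]; simp [hf]
  exact ⟨goal1, hexists, hrel, hfinA, hfinX, hclos⟩
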